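/- arXiv:2003.14055 — 5 statements merged into one kernel-verified Lean document; each statement's English description precedes it below -/
import Mathlib

section
/- Let X be a compact Hausdorff totally disconnected space, let n ≥ 1 be a natural number, and let A₁,…,Aₙ and B₁,…,Bₙ be clopen subsets of X such that for every x ∈ X the number of indices i with x ∈ Aᵢ equals the number of indices i with x ∈ Bᵢ. Then, regarding Fin n as a discrete space, there exists a homeomorphism h from the subspace {(x,i) ∈ X × Fin n | x ∈ Aᵢ} onto the subspace {(x,i) ∈ X × Fin n | x ∈ Bᵢ} which preserves the first coordinate, i.e. (h(x,i)).1 = x for all (x,i) in the domain. -/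
noncomputable def sigF {m : ℕ} (s t : Finset (Fin m)) (i : Fin m) : Fin m :=
  if h : i ∈ s ∧ s.card = t.card then ((Finset.equivOfCardEq h.2) ⟨i, h.1⟩ : Fin m) else i

noncomputable def tauF {m : ℕ} (s t : Finset (Fin m)) (i : Fin m) : Fin m :=
  if h : i ∈ t ∧ s.card = t.card then (((Finset.equivOfCardEq h.2).symm ⟨i, h.1⟩ : Fin m)) else i

lemma sigF_mem {m : ℕ} {s t : Finset (Fin m)} {i : Fin m} (hi : i ∈ s)
    (hc : s.card = t.card) : sigF s t i ∈ t := by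
  rw [sigF, dif_pos ⟨hi, hc⟩]; exact Finset.coe_mem _

lemma tauF_mem {m : ℕ} {s t : Finset (Fin m)} {i : Fin m} (hi : i ∈ t)
    (hc : s.card = t.card) : tauF s t i ∈ s := by
  rw [tauF, dif_pos ⟨hi, hc⟩]; exact Finset.coe_mem _

lemma tauF_sigF {m : ℕ} {s t : Finset (Fin m)} {i : Fin m} (hi : i ∈ s)
    (hc : s.card = t.card) : tauF s t (sigF s t i) = i := by
  have h1 : sigF s t i ∈ t := sigF_mem hi hc
  rw [tauF, dif_pos ⟨h1, hc⟩]
  have : (⟨sigF s t i, h1⟩ : {x // x ∈ t}) = Finset.equivOfCardEq hc ⟨i, hi⟩ := by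
    apply Subtype.ext; simp only [sigF]; rw [dif_pos ⟨hi, hc⟩]
  rw [this, Equiv.symm_apply_apply]

lemma sigF_tauF {m : ℕ} {s t : Finset (Fin m)} {i : Fin m} (hi : i ∈ t)
    (hc : s.card = t.card) : sigF s t (tauF s t i) = i := by
  have h1 : tauF s t i ∈ s := tauF_mem hi hc
  rw [sigF, dif_pos ⟨h1, hc⟩]
  have : (⟨tauF s t i, h1⟩ : {x // x ∈ s}) = (Finset.equivOfCardEq hc).symm ⟨i, hi⟩ := by
    apply Subtype.ext; simp only [tauF]; rw [dif_pos ⟨hi, hc⟩]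
  rw [this, Equiv.apply_symm_apply]

open Classical in
lemma lcSet_isLocallyConstant {X : Type*} [TopologicalSpace X] {n : ℕ} {A : Fin n → Set X}
    (hA : ∀ i, IsClopen (A i)) :
    IsLocallyConstant (fun x => Finset.univ.filter (fun i => x ∈ A i)) := by
  intro s
  have key : (fun x => Finset.univ.filter (fun i => x ∈ A i)) ⁻¹' s =
      ⋃ t ∈ s, ⋂ i : Fin n, (if i ∈ t then A i else (A i)ᶜ) := by
    ext x
    simp only [Set.mem_preimage, Set.mem_iUnion, Set.mem_iInter]
    constructor
    · intro hx
      refine ⟨_, hx, fun i => ?_⟩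
      by_cases h : i ∈ Finset.univ.filter (fun i => x ∈ A i)
      · rw [if_pos h]
        simpa using h
      · rw [if_neg h]
        simpa using h
    · rintro ⟨t, ht, hx⟩
      have : Finset.univ.filter (fun i => x ∈ A i) = t := by
        ext i
        have := hx i
        by_cases h : i ∈ t <;> simp_all
      rwa [this]
  rw [key]
  refine isOpen_biUnion fun t _ => isOpen_iInter_of_finite fun i => ?_
  split
  · exact (hA i).2
  · exact (hA i).compl.2

/-- **Cancellation for elementary groupoids `X × 𝓡ₙ`.**
If `X` is a compact Hausdorff totally disconnected space, `n ≥ 1`, and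
`A₁,…,Aₙ`, `B₁,…,Bₙ` are clopen subsets of `X` such that for every `x ∈ X`
the number of indices `i` with `x ∈ Aᵢ` equals the number of indices `i` with
`x ∈ Bᵢ`, then there is a homeomorphism between the subspaces
`{(x,i) | x ∈ Aᵢ}` and `{(x,i) | x ∈ Bᵢ}` of `X × Fin n` (with `Fin n`
discrete) preserving the first coordinate. -/
theorem stmt0 {X : Type*} [TopologicalSpace X] [CompactSpace X] [T2Space X]
    [TotallyDisconnectedSpace X] (n : ℕ) (hn : 1 ≤ n)
    (A B : Fin n → Set X) (hA : ∀ i, IsClopen (A i)) (hB : ∀ i, IsClopen (B i))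
    (hcard : ∀ x : X,
      Nat.card {i : Fin n // x ∈ A i} = Nat.card {i : Fin n // x ∈ B i}) :
    ∃ h : {p : X × Fin n // p.1 ∈ A p.2} ≃ₜ {p : X × Fin n // p.1 ∈ B p.2},
      ∀ p : {p : X × Fin n // p.1 ∈ A p.2}, ((h p : X × Fin n)).1 = (p : X × Fin n).1 := by
  classical
  set sA : X → Finset (Fin n) := fun x => Finset.univ.filter (fun i => x ∈ A i) with hsA
  set sB : X → Finset (Fin n) := fun x => Finset.univ.filter (fun i => x ∈ B i) with hsB
  have hmemA : ∀ x i, i ∈ sA x ↔ x ∈ A i := by intro x i; simp [hsA]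
  have hmemB : ∀ x i, i ∈ sB x ↔ x ∈ B i := by intro x i; simp [hsB]
  have hcard' : ∀ x, (sA x).card = (sB x).card := by
    intro x
    have h := hcard x
    rw [Nat.card_eq_fintype_card, Nat.card_eq_fintype_card, Fintype.card_subtype,
      Fintype.card_subtype] at h
    simpa [hsA, hsB] using h
  -- forward and backward maps
  set F : {p : X × Fin n // p.1 ∈ A p.2} → {p : X × Fin n // p.1 ∈ B p.2} :=
    fun q => ⟨(q.1.1, sigF (sA q.1.1) (sB q.1.1) q.1.2), by
      exact (hmemB q.1.1 _).1 (sigF_mem ((hmemA q.1.1 q.1.2).2 q.2) (hcard' q.1.1))⟩ with hF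
  set G : {p : X × Fin n // p.1 ∈ B p.2} → {p : X × Fin n // p.1 ∈ A p.2} :=
    fun q => ⟨(q.1.1, tauF (sA q.1.1) (sB q.1.1) q.1.2), by
      exact (hmemA q.1.1 _).1 (tauF_mem ((hmemB q.1.1 q.1.2).2 q.2) (hcard' q.1.1))⟩ with hG
  have hGF : Function.LeftInverse G F := by
    intro q
    apply Subtype.ext
    apply Prod.ext
    · rfl
    · exact tauF_sigF ((hmemA q.1.1 q.1.2).2 q.2) (hcard' q.1.1)
  have hFG : Function.RightInverse G F := by
    intro q
    apply Subtype.ext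
    apply Prod.ext
    · rfl
    · exact sigF_tauF ((hmemB q.1.1 q.1.2).2 q.2) (hcard' q.1.1)
  have hlcA : IsLocallyConstant sA := lcSet_isLocallyConstant hA
  have hlcB : IsLocallyConstant sB := lcSet_isLocallyConstant hB
  have hcontF : Continuous F := by
    apply Continuous.subtype_mk
    apply Continuous.prodMk
    · exact continuous_fst.comp continuous_subtype_val
    · have : (fun q : {p : X × Fin n // p.1 ∈ A p.2} =>
          sigF (sA q.1.1) (sB q.1.1) q.1.2) =
          (fun pr : (Finset (Fin n) × Finset (Fin n)) × Fin n => sigF pr.1.1 pr.1.2 pr.2) ∘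
          (fun q => ((sA q.1.1, sB q.1.1), q.1.2)) := rfl
      rw [this]
      refine IsLocallyConstant.continuous (IsLocallyConstant.comp ?_ _)
      refine IsLocallyConstant.prodMk (IsLocallyConstant.prodMk ?_ ?_) ?_
      · exact hlcA.comp_continuous (continuous_fst.comp continuous_subtype_val)
      · exact hlcB.comp_continuous (continuous_fst.comp continuous_subtype_val)
      · exact (IsLocallyConstant.iff_continuous _).2
          (continuous_snd.comp continuous_subtype_val)
  have hcontG : Continuous G := by
    apply Continuous.subtype_mk
    apply Continuous.prodMk
    · exact continuous_fst.comp continuous_subtype_val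
    · have : (fun q : {p : X × Fin n // p.1 ∈ B p.2} =>
          tauF (sA q.1.1) (sB q.1.1) q.1.2) =
          (fun pr : (Finset (Fin n) × Finset (Fin n)) × Fin n => tauF pr.1.1 pr.1.2 pr.2) ∘
          (fun q => ((sA q.1.1, sB q.1.1), q.1.2)) := rfl
      rw [this]
      refine IsLocallyConstant.continuous (IsLocallyConstant.comp ?_ _)
      refine IsLocallyConstant.prodMk (IsLocallyConstant.prodMk ?_ ?_) ?_
      · exact hlcA.comp_continuous (continuous_fst.comp continuous_subtype_val)
      · exact hlcB.comp_continuous (continuous_fst.comp continuous_subtype_val)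
      · exact (IsLocallyConstant.iff_continuous _).2
          (continuous_snd.comp continuous_subtype_val)
  refine ⟨⟨⟨F, G, hGF, hFG⟩, hcontF, hcontG⟩, fun p => rfl⟩
end

section
/- Let E be a directed graph and let w be a vertex of E such that the set of loops at w (edges e with s(e) = r(e) = w) is infinite, and such that for every vertex v of E there exists an edge with source w and range v. Let μ and μ′ be paths in E with r(μ) = r(μ′) = w and of equal length. Let P and Q be finite sets of positive integers, and for each k ∈ Q ∪ {0} ∪ P let mₖ be a positive integer and let v_{k,1},…,v_{k,mₖ} be vertices of E. Then there exists a natural number N with N ≥ q for every q ∈ Q such that: (1) there exist paths γ⁰_{k,i} (for k ∈ Q ∪ {0} ∪ P and 1 ≤ i ≤ mₖ), each of length N, with source s(μ) and range v_{k,i}, each having μ as a prefix, and pairwise distinct; (2) there exist paths γ_{p,i,j} (for p ∈ P, 1 ≤ i ≤ m_p, 1 ≤ j ≤ p), where γ_{p,i,j} has length N + j, source s(μ′) and range v_{p,i}, each having μ′ as a prefix, and such that no two distinct ones are comparable in the prefix order; (3) there exist paths γ_{q,i,l} (for q ∈ Q, 1 ≤ i ≤ m_q, 1 ≤ l ≤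 q), where γ_{q,i,l} has length N − l, source s(μ′) and range v_{q,i}, each having μ′ as a prefix, and such that no two distinct ones are comparable in the prefix order. -/
/-- A path in a directed graph with vertex type `V`, edge type `E₁` and source
and range maps `σ, ρ : E₁ → V`, from the vertex `u` to the vertex `v`, recorded
by its list of edges (vertices are paths of length `0`). -/
structure GPath (V E₁ : Type*) (σ ρ : E₁ → V) (u v : V) where
  /-- the list of edges traversed -/
  edges : List E₁
  /-- consecutive edges are composable -/
  chain : edges.Chain' fun e f => ρ e = σ f
  /-- the first edge starts at `u` -/
  src : ∀ e ∈ edges.head?, σ e = u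
  /-- the last edge ends at `v` -/
  rng : ∀ e ∈ edges.getLast?, ρ e = v
  /-- a path of length `0` has equal endpoints -/
  nil_eq : edges = [] → u = v


section Aux

variable {V E₁ : Type*} {σ ρ : E₁ → V} {w : V}

private theorem chain'_aux (f : ℕ → E₁) (hf : ∀ n, σ (f n) = w ∧ ρ (f n) = w)
    (e : E₁) (hes : σ e = w) (c n : ℕ) :
    (f c :: (List.replicate n (f 0) ++ [e])).Chain' (fun a b => ρ a = σ b) := by
  induction n generalizing c with
  | zero => simp [(hf c).2.trans hes.symm, List.Chain', List.isChain_pair]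
  | succ n ih =>
    simp only [List.replicate_succ, List.cons_append, List.Chain', List.isChain_cons_cons]
    exact ⟨(hf c).2.trans ((hf 0).1).symm, ih 0⟩

/-- The basic building block: `base` followed by the loop coding `c`, then
`n` copies of a fixed loop, then an edge `e` into the target. -/
private def mkPath {u v0 : V} (base : GPath V E₁ σ ρ u w) (f : ℕ → E₁)
    (hf : ∀ n, σ (f n) = w ∧ ρ (f n) = w) (e : E₁) (hes : σ e = w)
    (her : ρ e = v0) (c n : ℕ) : GPath V E₁ σ ρ u v0 where
  edges := base.edges ++ f c :: (List.replicate n (f 0) ++ [e])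
  chain := by
    refine List.IsChain.append base.chain (chain'_aux f hf e hes c n) ?_
    intro x hx y hy
    simp only [List.head?_cons, Option.mem_def, Option.some.injEq] at hy
    subst hy
    exact (base.rng x hx).trans ((hf c).1).symm
  src := by
    intro a ha
    rcases hb : base.edges with _ | ⟨b, l⟩
    · rw [hb] at ha
      simp only [List.nil_append, List.head?_cons, Option.mem_def,
        Option.some.injEq] at ha
      subst ha
      exact (hf c).1.trans (base.nil_eq hb).symm
    · rw [hb] at ha
      simp only [List.cons_append, List.head?_cons, Option.mem_def,
        Option.some.injEq] at ha
      subst ha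
      exact base.src _ (by simp [hb])
  rng := by
    intro a ha
    have : base.edges ++ f c :: (List.replicate n (f 0) ++ [e])
        = (base.edges ++ f c :: List.replicate n (f 0)) ++ [e] := by simp
    rw [this, List.getLast?_concat] at ha
    simp only [Option.mem_def, Option.some.injEq] at ha
    subst ha
    exact her
  nil_eq := by simp

private theorem mkPath_length {u v0 : V} (base : GPath V E₁ σ ρ u w)
    (f : ℕ → E₁) (hf : ∀ n, σ (f n) = w ∧ ρ (f n) = w) (e : E₁)
    (hes : σ e = w) (her : ρ e = v0) (c n : ℕ) :
    (mkPath base f hf e hes her c n).edges.length = base.edges.length + n + 2 := by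
  simp [mkPath]; omega

private theorem mkPath_prefix {u v0 : V} (base : GPath V E₁ σ ρ u w)
    (f : ℕ → E₁) (hf : ∀ n, σ (f n) = w ∧ ρ (f n) = w) (e : E₁)
    (hes : σ e = w) (her : ρ e = v0) (c n : ℕ) :
    base.edges <+: (mkPath base f hf e hes her c n).edges :=
  List.prefix_append _ _

private theorem mkPath_getElem {u v0 : V} (base : GPath V E₁ σ ρ u w)
    (f : ℕ → E₁) (hf : ∀ n, σ (f n) = w ∧ ρ (f n) = w) (e : E₁)
    (hes : σ e = w) (her : ρ e = v0) (c n : ℕ)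
    (h : base.edges.length < (mkPath base f hf e hes her c n).edges.length) :
    (mkPath base f hf e hes her c n).edges[base.edges.length] = f c := by
  show (base.edges ++ f c :: (List.replicate n (f 0) ++ [e]))[base.edges.length]'(by
    simpa [mkPath] using h) = f c
  rw [List.getElem_append_right (le_refl _)]
  simp

private theorem code_eq_of_prefix {u u2 v0 v1 : V} (base : GPath V E₁ σ ρ u w)
    (base2 : GPath V E₁ σ ρ u2 w)
    (hbl : base.edges.length = base2.edges.length)
    (f : ℕ → E₁) (hf : ∀ n, σ (f n) = w ∧ ρ (f n) = w)
    (e e' : E₁) (hes : σ e = w) (her : ρ e = v0) (hes' : σ e' = w)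
    (her' : ρ e' = v1) (c c' n n' : ℕ)
    (h : (mkPath base f hf e hes her c n).edges <+:
      (mkPath base2 f hf e' hes' her' c' n').edges) : f c = f c' := by
  have h1 : base.edges.length < (mkPath base f hf e hes her c n).edges.length := by
    rw [mkPath_length]; omega
  have h2 : base2.edges.length < (mkPath base2 f hf e' hes' her' c' n').edges.length := by
    rw [mkPath_length]; omega
  obtain ⟨t, ht⟩ := h
  have h1' : base2.edges.length < (mkPath base f hf e hes her c n).edges.length :=
    hbl ▸ h1
  have key : (mkPath base f hf e hes her c n).edges[base.edges.length]? =
      (mkPath base2 f hf e' hes' her' c' n').edges[base2.edges.length]? := by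
    rw [hbl, ← ht, List.getElem?_append_left h1']
  rw [List.getElem?_eq_getElem h1, List.getElem?_eq_getElem h2,
    mkPath_getElem _ _ _ _ _ _ _ _ h1, mkPath_getElem _ _ _ _ _ _ _ _ h2] at key
  exact Option.some.inj key

end Aux


/-- **The combinatorial core of Lemma 8.1 of the paper.** Let `E` be a directed
graph and `w` a vertex supporting infinitely many loops and emitting at least
one edge to every vertex. Let `μ, μ′` be paths of equal length with range `w`,
let `P, Q` be finite sets of positive integers, and for each
`k ∈ Q ∪ {0} ∪ P` let `m k > 0` and vertices `v k 1, …, v k (m k)` be given.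
Then there is `N ≥ max Q` together with: (1) pairwise distinct paths
`γ⁰_{k,i}` of length `N` from `s(μ)` to `v k i` extending `μ`; (2) paths
`γ_{p,i,j}` (`p ∈ P`, `1 ≤ j ≤ p`) of length `N + j` from `s(μ′)` to `v p i`
extending `μ′`, no two distinct ones comparable in the prefix order; (3) paths
`γ_{q,i,l}` (`q ∈ Q`, `1 ≤ l ≤ q`) of length `N − l` from `s(μ′)` to `v q i`
extending `μ′`, no two distinct ones comparable in the prefix order. -/

theorem stmt1 {V E₁ : Type*} (σ ρ : E₁ → V) (w : V)
    (hloops : {e : E₁ | σ e = w ∧ ρ e = w}.Infinite)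
    (hedges : ∀ v : V, ∃ e : E₁, σ e = w ∧ ρ e = v)
    {u u' : V} (μ : GPath V E₁ σ ρ u w) (μ' : GPath V E₁ σ ρ u' w)
    (hlen : μ.edges.length = μ'.edges.length)
    (P Q : Finset ℕ) (hP : ∀ p ∈ P, 0 < p) (hQ : ∀ q ∈ Q, 0 < q)
    (m : ℕ → ℕ) (hm : ∀ k ∈ Q ∪ {0} ∪ P, 0 < m k)
    (v : (k : ℕ) → Fin (m k) → V) :
    ∃ N : ℕ, (∀ q ∈ Q, q ≤ N) ∧
      (∃ γ0 : (k : ℕ) → (i : Fin (m k)) → GPath V E₁ σ ρ u (v k i),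
        (∀ k ∈ Q ∪ {0} ∪ P, ∀ i : Fin (m k),
          (γ0 k i).edges.length = N ∧ μ.edges <+: (γ0 k i).edges) ∧
        (∀ k ∈ Q ∪ {0} ∪ P, ∀ k' ∈ Q ∪ {0} ∪ P,
          ∀ (i : Fin (m k)) (i' : Fin (m k')),
          (k ≠ k' ∨ (i : ℕ) ≠ (i' : ℕ)) → (γ0 k i).edges ≠ (γ0 k' i').edges)) ∧
      (∃ γP : (p : ℕ) → (i : Fin (m p)) → ℕ → GPath V E₁ σ ρ u' (v p i),
        (∀ p ∈ P, ∀ i : Fin (m p), ∀ j : ℕ, 1 ≤ j → j ≤ p →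
          (γP p i j).edges.length = N + j ∧ μ'.edges <+: (γP p i j).edges) ∧
        (∀ p ∈ P, ∀ p' ∈ P, ∀ (i : Fin (m p)) (i' : Fin (m p')), ∀ j j' : ℕ,
          1 ≤ j → j ≤ p → 1 ≤ j' → j' ≤ p' →
          (p ≠ p' ∨ (i : ℕ) ≠ (i' : ℕ) ∨ j ≠ j') →
          ¬ (γP p i j).edges <+: (γP p' i' j').edges)) ∧
      (∃ γQ : (q : ℕ) → (i : Fin (m q)) → ℕ → GPath V E₁ σ ρ u' (v q i),
        (∀ q ∈ Q, ∀ i : Fin (m q), ∀ l : ℕ, 1 ≤ l → l ≤ q →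
          (γQ q i l).edges.length = N - l ∧ μ'.edges <+: (γQ q i l).edges) ∧
        (∀ q ∈ Q, ∀ q' ∈ Q, ∀ (i : Fin (m q)) (i' : Fin (m q')), ∀ l l' : ℕ,
          1 ≤ l → l ≤ q → 1 ≤ l' → l' ≤ q' →
          (q ≠ q' ∨ (i : ℕ) ≠ (i' : ℕ) ∨ l ≠ l') →
          ¬ (γQ q i l).edges <+: (γQ q' i' l').edges)) := by
    classical
  -- a sequence of distinct loops at `w`
  set femb := hloops.natEmbedding with hfemb
  set f : ℕ → E₁ := fun n => (femb n : E₁) with hf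
  have hfprop : ∀ n, σ (f n) = w ∧ ρ (f n) = w := fun n => (femb n).2
  have hfinj : Function.Injective f := fun a b h => femb.injective (Subtype.ext h)
  -- an edge from `w` to every vertex
  set ε : V → E₁ := fun x => (hedges x).choose with hε
  have hεs : ∀ x, σ (ε x) = w := fun x => (hedges x).choose_spec.1
  have hεr : ∀ x, ρ (ε x) = x := fun x => (hedges x).choose_spec.2
  set L := μ.edges.length with hL
  set S := Q.sup id with hS
  have hSq : ∀ q ∈ Q, q ≤ S := fun q hq => Finset.le_sup (f := id) hq
  refine ⟨L + S + 2, fun q hq => by have := hSq q hq; omega, ?_, ?_, ?_⟩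
  · -- the γ⁰ family
    refine ⟨fun k i => mkPath μ f hfprop (ε (v k i)) (hεs _) (hεr _)
      (Nat.pair k i) S, ?_, ?_⟩
    · intro k hk i
      exact ⟨mkPath_length .., mkPath_prefix ..⟩
    · intro k hk k' hk' i i' hne heq
      have hpre : (mkPath μ f hfprop (ε (v k i)) (hεs _) (hεr _)
          (Nat.pair k i) S).edges <+: (mkPath μ f hfprop (ε (v k' i')) (hεs _)
          (hεr _) (Nat.pair k' i') S).edges := ⟨[], by simp [heq]⟩
      have : f (Nat.pair k i) = f (Nat.pair k' i') :=
        code_eq_of_prefix μ μ rfl f hfprop _ _ (hεs _) (hεr _) (hεs _) (hεr _)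
          _ _ _ _ hpre
      have := Nat.pair_eq_pair.mp (hfinj this)
      tauto
  · -- the γP family
    refine ⟨fun p i j => mkPath μ' f hfprop (ε (v p i)) (hεs _) (hεr _)
      (Nat.pair p (Nat.pair i j)) (S + j), ?_, ?_⟩
    · intro p hp i j hj1 hj2
      refine ⟨?_, mkPath_prefix ..⟩
      rw [mkPath_length, ← hlen]
      omega
    · intro p hp p' hp' i i' j j' _ _ _ _ hne h
      have : f (Nat.pair p (Nat.pair i j)) = f (Nat.pair p' (Nat.pair i' j')) :=
        code_eq_of_prefix μ' μ' rfl f hfprop _ _ (hεs _) (hεr _) (hεs _) (hεr _)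
          _ _ _ _ h
      have h1 := Nat.pair_eq_pair.mp (hfinj this)
      have h2 := Nat.pair_eq_pair.mp h1.2
      tauto
  · -- the γQ family
    refine ⟨fun q i l => mkPath μ' f hfprop (ε (v q i)) (hεs _) (hεr _)
      (Nat.pair q (Nat.pair i l)) (S - l), ?_, ?_⟩
    · intro q hq i l hl1 hl2
      have hlS : l ≤ S := le_trans hl2 (hSq q hq)
      refine ⟨?_, mkPath_prefix ..⟩
      rw [mkPath_length, ← hlen]
      omega
    · intro q hq q' hq' i i' l l' _ _ _ _ hne h
      have : f (Nat.pair q (Nat.pair i l)) = f (Nat.pair q' (Nat.pair i' l')) :=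
        code_eq_of_prefix μ' μ' rfl f hfprop _ _ (hεs _) (hεr _) (hεs _) (hεr _)
          _ _ _ _ h
      have h1 := Nat.pair_eq_pair.mp (hfinj this)
      have h2 := Nat.pair_eq_pair.mp h1.2
      tauto
end

section
/- Let X be a locally compact Hausdorff topological space and give ℤ the discrete topology. Let C_c(X × ℤ, ℤ) and C_c(X, ℤ) denote the abelian groups of continuous compactly supported ℤ-valued functions. Define ρ_* : C_c(X × ℤ, ℤ) → C_c(X × ℤ, ℤ) by (ρ_* f)(x, m) = f(x, m−1), and π_* : C_c(X × ℤ, ℤ) → C_c(X, ℤ) by (π_* f)(x) = ∑_{m ∈ ℤ} f(x, m) (a finite sum, since the support of f is compact). Then: (i) id − ρ_* is injective; (ii) π_* is surjective; (iii) the kernel of π_* equals the range of id − ρ_*. In other words, 0 → C_c(X × ℤ, ℤ) → C_c(X × ℤ, ℤ) → C_c(X, ℤ) → 0 is a short exact sequence of abelian groups. -/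
open scoped CompactlySupported

/-- Continuity of a function on a product with a discrete space can be checked slicewise. -/
lemma cont_of_slices {X Y Z : Type*} [TopologicalSpace X] [TopologicalSpace Y]
    [DiscreteTopology Y] [TopologicalSpace Z] {h : X × Y → Z}
    (H : ∀ y, Continuous fun x => h (x, y)) : Continuous h := by
  rw [continuous_iff_continuousAt]
  rintro ⟨x, y⟩
  rw [ContinuousAt, nhds_prod_eq, nhds_discrete Y, Filter.prod_pure, Filter.tendsto_map'_iff]
  exact (H y).tendsto x

/-- A compactly supported function on `X × ℤ` vanishes outside a band. -/
lemma exists_band {X : Type*} [TopologicalSpace X] (f : C_c(X × ℤ, ℤ)) :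
    ∃ a b : ℤ, ∀ x m, f (x, m) ≠ 0 → a ≤ m ∧ m ≤ b := by
  have hK : IsCompact (tsupport f) := f.hasCompactSupport'
  have hS : (Prod.snd '' tsupport f).Finite :=
    (hK.image continuous_snd).finite_of_discrete
  obtain ⟨b, hb⟩ := hS.bddAbove
  obtain ⟨a, ha⟩ := hS.bddBelow
  refine ⟨a, b, fun x m hm => ?_⟩
  have : m ∈ Prod.snd '' tsupport f :=
    ⟨(x, m), subset_tsupport _ hm, rfl⟩
  exact ⟨ha this, hb this⟩

/-- **The short exact sequence underlying Proposition 6.1 of the paper.**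
Let `X` be a locally compact Hausdorff space, `ℤ` discrete. Let
`ρ_* : C_c(X × ℤ, ℤ) →+ C_c(X × ℤ, ℤ)` be given by `(ρ_* f)(x, m) = f (x, m − 1)`
and `π_* : C_c(X × ℤ, ℤ) →+ C_c(X, ℤ)` by `(π_* f)(x) = ∑_{m ∈ ℤ} f (x, m)`.
Then `id − ρ_*` is injective, `π_*` is surjective, and the kernel of `π_*`
equals the range of `id − ρ_*`; i.e.
`0 → C_c(X × ℤ, ℤ) → C_c(X × ℤ, ℤ) → C_c(X, ℤ) → 0` is short exact. -/
theorem stmt3 {X : Type*} [TopologicalSpace X] [LocallyCompactSpace X] [T2Space X]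
    (ρ : C_c(X × ℤ, ℤ) →+ C_c(X × ℤ, ℤ))
    (hρ : ∀ (f : C_c(X × ℤ, ℤ)) (x : X) (m : ℤ), ρ f (x, m) = f (x, m - 1))
    (π : C_c(X × ℤ, ℤ) →+ C_c(X, ℤ))
    (hπ : ∀ (f : C_c(X × ℤ, ℤ)) (x : X), π f x = ∑ᶠ m : ℤ, f (x, m)) :
    Function.Injective (fun f : C_c(X × ℤ, ℤ) => f - ρ f) ∧
    Function.Surjective π ∧
    ∀ f : C_c(X × ℤ, ℤ), π f = 0 ↔ ∃ g : C_c(X × ℤ, ℤ), f = g - ρ g := by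
  -- Auxiliary fact: if `d = ρ d` (pointwise shift-invariance) then `d = 0`.
  have key : ∀ d : C_c(X × ℤ, ℤ), (∀ x m, d (x, m) = d (x, m - 1)) → d = 0 := by
    intro d hd
    obtain ⟨a, b, hab⟩ := exists_band d
    have shift : ∀ (n : ℕ) (x : X) (m : ℤ), d (x, m) = d (x, m - n) := by
      intro n
      induction n with
      | zero => simp
      | succ k ih =>
        intro x m
        rw [ih x m, hd x (m - k)]
        congr 2
        push_cast
        ring
    ext ⟨x, m⟩
    have h1 : d (x, m) = d (x, m - ((m - a + 1).toNat : ℤ)) := shift _ x m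
    have h2 : m - ((m - a + 1).toNat : ℤ) < a := by
      have := Int.self_le_toNat (m - a + 1)
      omega
    rw [h1]
    by_contra hne
    exact absurd (hab x _ hne).1 (not_le.mpr h2)
  refine ⟨?_, ?_, ?_⟩
  · -- injectivity of `id - ρ`
    intro f g hfg
    simp only at hfg
    have hd : (f - g) - ρ (f - g) = 0 := by
      rw [map_sub, sub_sub_sub_comm, hfg, sub_self]
    have hsi : ∀ x m, (f - g) (x, m) = (f - g) (x, m - 1) := by
      intro x m
      have h1 := congrArg (fun h : C_c(X × ℤ, ℤ) => h (x, m)) hd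
      simp only [CompactlySupportedContinuousMap.sub_apply,
        CompactlySupportedContinuousMap.zero_apply, hρ] at h1
      simp only [CompactlySupportedContinuousMap.sub_apply]
      omega
    have h0 := key _ hsi
    rw [sub_eq_zero] at h0
    exact h0
  · -- surjectivity of π
    intro g
    have contF : Continuous fun p : X × ℤ => if p.2 = 0 then g p.1 else 0 := by
      apply cont_of_slices
      intro m
      rcases eq_or_ne m 0 with hm | hm
      · simpa [hm] using g.continuous
      · simpa [hm] using continuous_const
    have suppF : HasCompactSupport fun p : X × ℤ => if p.2 = 0 then g p.1 else 0 := by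
      apply HasCompactSupport.intro
        (g.hasCompactSupport'.prod (isCompact_singleton : IsCompact ({0} : Set ℤ)))
      rintro ⟨x, m⟩ hx
      simp only [Set.prodMk_mem_set_prod_eq, Set.mem_singleton_iff, not_and_or] at hx
      rcases hx with hx | hx
      · by_cases hm : m = 0
        · simp only [hm, if_true]
          exact image_eq_zero_of_notMem_tsupport hx
        · simp [hm]
      · simp [hx]
    refine ⟨⟨⟨fun p => if p.2 = 0 then g p.1 else 0, contF⟩, suppF⟩, ?_⟩
    ext x
    rw [hπ]
    have h1 : ∑ᶠ m : ℤ, (if m = (0 : ℤ) then g x else 0) = if (0 : ℤ) = 0 then g x else 0 :=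
      finsum_eq_single _ 0 (fun m hm => by simp [hm])
    simpa using h1
  · -- kernel of π = range of (id - ρ)
    intro f
    constructor
    · -- the hard direction: construct the primitive g
      intro hf
      obtain ⟨a, b, hab⟩ := exists_band f
      -- the raw primitive
      have contG : Continuous fun p : X × ℤ => ∑ k ∈ Finset.Icc a p.2, f (p.1, k) := by
        apply cont_of_slices
        intro m
        have : (fun x : X => ∑ k ∈ Finset.Icc a (x, m).2, f ((x, m).1, k))
            = fun x : X => ∑ k ∈ Finset.Icc a m, f (x, k) := rfl
        rw [this]
        exact continuous_finset_sum _ fun k _ =>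
          f.continuous.comp (Continuous.prodMk_left k)
      -- total sum is zero
      have total : ∀ x, ∑ᶠ m : ℤ, f (x, m) = 0 := by
        intro x
        rw [← hπ f x, hf]
        rfl
      have fsum : ∀ x, ∑ᶠ m : ℤ, f (x, m) = ∑ k ∈ Finset.Icc a b, f (x, k) := by
        intro x
        apply finsum_eq_finset_sum_of_support_subset
        intro m hm
        simp only [Finset.coe_Icc, Set.mem_Icc]
        exact hab x m hm
      have Gzero : ∀ x (m : ℤ), (m < a ∨ b ≤ m) →
          ∑ k ∈ Finset.Icc a m, f (x, k) = 0 := by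
        intro x m hm
        rcases hm with hm | hm
        · rw [Finset.Icc_eq_empty (by omega), Finset.sum_empty]
        · have hsub : ∑ k ∈ Finset.Icc a b, f (x, k) = ∑ k ∈ Finset.Icc a m, f (x, k) := by
            apply Finset.sum_subset (Finset.Icc_subset_Icc_right hm)
            intro k _ hk
            simp only [Finset.mem_Icc, not_and, not_le] at hk
            by_contra hne
            have := hab x k hne
            omega
          rw [← hsub, ← fsum, total]
      have hGsupp : HasCompactSupport fun p : X × ℤ => ∑ k ∈ Finset.Icc a p.2, f (p.1, k) := by
        apply HasCompactSupport.intro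
          ((f.hasCompactSupport'.image continuous_fst).prod (Set.finite_Icc a b).isCompact)
        rintro ⟨x, m⟩ hx
        simp only [Set.prodMk_mem_set_prod_eq, not_and_or, Set.mem_Icc, not_and, not_le] at hx
        rcases hx with hx | hx
        · apply Finset.sum_eq_zero
          intro k _
          by_contra hne
          exact hx ⟨(x, k), subset_tsupport _ hne, rfl⟩
        · by_cases ham : m < a
          · exact Gzero x m (Or.inl ham)
          · exact Gzero x m (Or.inr (by omega))
      refine ⟨⟨⟨fun p => ∑ k ∈ Finset.Icc a p.2, f (p.1, k), contG⟩, hGsupp⟩, ?_⟩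
      ext ⟨x, m⟩
      simp only [CompactlySupportedContinuousMap.sub_apply, hρ]
      show f (x, m) = (∑ k ∈ Finset.Icc a m, f (x, k)) - ∑ k ∈ Finset.Icc a (m - 1), f (x, k)
      by_cases ham : a ≤ m
      · have hins : Finset.Icc a m = insert m (Finset.Icc a (m - 1)) := by
          ext k
          simp only [Finset.mem_Icc, Finset.mem_insert]
          omega
        rw [hins, Finset.sum_insert (by simp only [Finset.mem_Icc]; omega)]
        ring
      · rw [Gzero x m (Or.inl (by omega)), Gzero x (m - 1) (Or.inl (by omega))]
        by_contra hne
        have := hab x m (by omega)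
        omega
    · -- the easy direction: π (g - ρ g) = 0
      rintro ⟨g, rfl⟩
      rw [map_sub]
      have hpg : π (ρ g) = π g := by
        ext x
        rw [hπ, hπ]
        have h2 := finsum_comp_equiv (Equiv.subRight (1 : ℤ)) (f := fun m : ℤ => g (x, m))
        calc ∑ᶠ m : ℤ, (ρ g) (x, m) = ∑ᶠ m : ℤ, g (x, m - 1) :=
              finsum_congr fun m => hρ g x m
          _ = ∑ᶠ m : ℤ, g (x, m) := h2
      rw [hpg, sub_self]
end

section
/- Let X be a Hausdorff topological space that has a basis of clopen sets, and let Γ be a group of homeomorphisms of X. For a homeomorphism α of X and a clopen set Z ⊆ X with α(Z) ∩ Z = ∅, let τ_{α,Z} denote the homeomorphism of X equal to α on Z, equal to α⁻¹ on α(Z), and equal to the identity elsewhere. Let H be an abelian group and I : Γ → H a group homomorphism. Assume: (i) for every α ∈ Γ and every clopen Z ⊆ X with α(Z) ∩ Z = ∅, the map τ_{α,Z} belongs to Γ and I(τ_{α,Z}) = 0; (ii) every β ∈ Γ with I(β) = 0 whose support (the closure of {x ∈ X : β(x) ≠ x}) is a proper subset of X is a product of elements of the form τ_{α,Z} (with α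 ∈ Γ and Z clopen, α(Z) ∩ Z = ∅). Then every β ∈ Γ with I(β) = 0 is a product of elements of the form τ_{α,Z}. -/
/-- The group of self-homeomorphisms of a topological space,
with `a * b = b.trans a` (i.e. `a ∘ b`). -/
instance homeoGroup (X : Type*) [TopologicalSpace X] : Group (Homeomorph X X) where
  mul a b := b.trans a
  one := Homeomorph.refl X
  inv := Homeomorph.symm
  mul_assoc a b c := rfl
  one_mul a := Homeomorph.ext fun _ => rfl
  mul_one a := Homeomorph.ext fun _ => rfl
  inv_mul_cancel a := Homeomorph.ext fun x => a.symm_apply_apply x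

/-- `τ` is the homeomorphism equal to `α` on `Z`, to `α⁻¹` on `α(Z)`, and to the
identity elsewhere. -/
def PiecewiseSwap {X : Type*} [TopologicalSpace X] (α τ : Homeomorph X X) (Z : Set X) : Prop :=
  (∀ x ∈ Z, τ x = α x) ∧ (∀ x ∈ α '' Z, τ x = α.symm x) ∧
    ∀ x, x ∉ Z → x ∉ α '' Z → τ x = x

/-- `τ` is a transposition built from an element `α` of `Γ` and a clopen set `Z`
with `α(Z) ∩ Z = ∅`. -/
def IsTransp {X : Type*} [TopologicalSpace X] (Γ : Subgroup (Homeomorph X X))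
    (τ : Homeomorph X X) : Prop :=
  ∃ α ∈ Γ, ∃ Z : Set X, IsClopen Z ∧ (α '' Z) ∩ Z = ∅ ∧ PiecewiseSwap α τ Z

/-- **Lemma 4.8 of the paper, abstracted.** Let `X` be Hausdorff with a basis of
clopen sets, `Γ` a group of homeomorphisms of `X`, `H` an abelian group and
`I : Γ → H` a group homomorphism. If (i) for every `α ∈ Γ` and clopen `Z` with
`α(Z) ∩ Z = ∅` the transposition `τ_{α,Z}` lies in `Γ` and `I(τ_{α,Z}) = 0`, and
(ii) every `β ∈ Γ` with `I(β) = 0` whose support is a proper subset of `X` is a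
product of such transpositions, then every `β ∈ Γ` with `I(β) = 0` is a product
of such transpositions. -/
theorem stmt5 {X : Type*} [TopologicalSpace X] [T2Space X]
    (hbasis : ∃ B : Set (Set X), (∀ S ∈ B, IsClopen S) ∧
      TopologicalSpace.IsTopologicalBasis B)
    (Γ : Subgroup (Homeomorph X X)) {H : Type*} [AddCommGroup H]
    (I : Γ → H) (hI : ∀ a b : Γ, I (a * b) = I a + I b)
    (h1 : ∀ α, α ∈ Γ → ∀ Z : Set X, IsClopen Z → (α '' Z) ∩ Z = ∅ →
      ∃ τ : Homeomorph X X, PiecewiseSwap α τ Z ∧ ∃ hτ : τ ∈ Γ, I ⟨τ, hτ⟩ = 0)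
    (h2 : ∀ β : Γ, I β = 0 → closure {x | (β : Homeomorph X X) x ≠ x} ≠ Set.univ →
      ∃ l : List (Homeomorph X X), (∀ τ ∈ l, IsTransp Γ τ) ∧ (β : Homeomorph X X) = l.prod) :
    ∀ β : Γ, I β = 0 →
      ∃ l : List (Homeomorph X X), (∀ τ ∈ l, IsTransp Γ τ) ∧ (β : Homeomorph X X) = l.prod := by
  intro β hβ
  -- I 1 = 0 and I of inverses
  have hI1 : I 1 = 0 := by
    have := hI 1 1
    simpa using (by
      have h := hI 1 1
      rw [mul_one] at h
      have : I 1 = I 1 + I 1 := h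
      exact (left_eq_add.mp this))
  have hIinv : ∀ a : Γ, I a⁻¹ = - I a := by
    intro a
    have h := hI a⁻¹ a
    rw [inv_mul_cancel, hI1] at h
    exact eq_neg_of_add_eq_zero_left h.symm
  by_cases hmove : ∃ x : X, (β : Homeomorph X X) x ≠ x
  · obtain ⟨x, hx⟩ := hmove
    -- find a clopen Z ∋ x with β(Z) ∩ Z = ∅
    obtain ⟨B, hBclopen, hBbasis⟩ := hbasis
    obtain ⟨U, V, hU, hV, hbxU, hxV, hUV⟩ := t2_separation hx
    have hW : IsOpen (V ∩ (β : Homeomorph X X) ⁻¹' U) :=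
      hV.inter ((β : Homeomorph X X).continuous.isOpen_preimage U hU)
    have hxW : x ∈ V ∩ (β : Homeomorph X X) ⁻¹' U := ⟨hxV, hbxU⟩
    obtain ⟨Z, hZB, hxZ, hZW⟩ := hBbasis.exists_subset_of_mem_open hxW hW
    have hZclopen : IsClopen Z := hBclopen Z hZB
    have hdisj : ((β : Homeomorph X X) '' Z) ∩ Z = ∅ := by
      apply Set.eq_empty_iff_forall_notMem.mpr
      rintro y ⟨⟨z, hzZ, rfl⟩, hyZ⟩
      have h1' : (β : Homeomorph X X) z ∈ U := (hZW hzZ).2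
      have h2' : (β : Homeomorph X X) z ∈ V := (hZW hyZ).1
      exact Set.disjoint_iff.mp hUV ⟨h1', h2'⟩
    obtain ⟨τ, hswap, hτΓ, hIτ⟩ := h1 (β : Homeomorph X X) β.2 Z hZclopen hdisj
    set τ' : Γ := ⟨τ, hτΓ⟩
    set β' : Γ := τ'⁻¹ * β with hβ'def
    have hIβ' : I β' = 0 := by
      rw [hβ'def, hI, hIinv, hIτ, hβ]
      simp
    -- β' fixes Z pointwise
    have hfix : ∀ z ∈ Z, (β' : Homeomorph X X) z = z := by
      intro z hz
      have : (β' : Homeomorph X X) z = τ.symm ((β : Homeomorph X X) z) := rfl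
      rw [this, ← hswap.1 z hz]
      exact τ.symm_apply_apply z
    have hsupp : closure {y | (β' : Homeomorph X X) y ≠ y} ≠ Set.univ := by
      intro hc
      have hsub : {y | (β' : Homeomorph X X) y ≠ y} ⊆ Zᶜ := by
        intro y hy
        intro hyZ
        exact hy (hfix y hyZ)
      have : closure {y | (β' : Homeomorph X X) y ≠ y} ⊆ Zᶜ :=
        closure_minimal hsub (isClosed_compl_iff.mpr hZclopen.2)
      rw [hc] at this
      exact (this (Set.mem_univ x)) hxZ
    obtain ⟨l, hl, hlprod⟩ := h2 β' hIβ' hsupp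
    refine ⟨τ :: l, ?_, ?_⟩
    · intro σ hσ
      rcases List.mem_cons.mp hσ with h | h
      · subst h
        exact ⟨(β : Homeomorph X X), β.2, Z, hZclopen, hdisj, hswap⟩
      · exact hl σ h
    · have : β = τ' * β' := by rw [hβ'def]; group
      rw [this]
      have hcoe : ((τ' * β' : Γ) : Homeomorph X X) = τ * (β' : Homeomorph X X) := rfl
      rw [hcoe, List.prod_cons, hlprod]
  · -- β is the identity
    push_neg at hmove
    refine ⟨[], by simp, ?_⟩
    simp only [List.prod_nil]
    exact Homeomorph.ext fun y => hmove y
end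

section
/- Let E be a directed graph such that for all vertices u, v of E there exists a path from u to v (E is strongly connected), and suppose that some vertex of E emits at least two distinct edges. Then for every vertex v of E there exist cycles c and c′ based at v (paths of positive length from v to v) such that neither of c and c′ is a prefix of the other. -/
/-- `l` is (the edge list of) a path in the graph with source and range maps
`σ, ρ`: consecutive edges are composable. -/
def IsPathList {V E₁ : Type*} (σ ρ : E₁ → V) (l : List E₁) : Prop :=
  l.Chain' fun e f => ρ e = σ f

/-- `l` is a path from `u` to `v` (vertices are regarded as paths of length 0). -/
def IsPathFromTo {V E₁ : Type*} (σ ρ : E₁ → V) (u v : V) (l : List E₁) : Prop :=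
  IsPathList σ ρ l ∧ (l = [] → u = v) ∧
    (∀ e ∈ l.head?, σ e = u) ∧ (∀ e ∈ l.getLast?, ρ e = v)

lemma IsPathFromTo.append {V E₁ : Type*} {σ ρ : E₁ → V} {a b c : V} {l m : List E₁}
    (h1 : IsPathFromTo σ ρ a b l) (h2 : IsPathFromTo σ ρ b c m) :
    IsPathFromTo σ ρ a c (l ++ m) := by
  obtain ⟨hc1, he1, hh1, hl1⟩ := h1
  obtain ⟨hc2, he2, hh2, hl2⟩ := h2
  refine ⟨?_, ?_, ?_, ?_⟩
  · exact List.isChain_append.mpr ⟨hc1, hc2, fun x hx y hy => by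
      rw [hl1 x hx, ← hh2 y hy]⟩
  · intro h
    rcases List.append_eq_nil_iff.mp h with ⟨h1', h2'⟩
    exact (he1 h1').trans (he2 h2')
  · intro e he
    rcases hl : l with _ | ⟨x, l'⟩
    · subst hl
      simp only [List.nil_append] at he
      rw [hh2 e he, ← he1 rfl]
    · rw [hl] at he
      simp only [List.cons_append, List.head?_cons, Option.mem_def,
        Option.some.injEq] at he
      rw [← he]
      exact hh1 x (by simp [hl])
  · intro e he
    rcases hm : m with _ | ⟨y, m'⟩
    · subst hm
      simp only [List.append_nil] at he
      rw [hl1 e he, he2 rfl]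
    · rw [hm, List.getLast?_append_of_ne_nil _ (by simp)] at he
      exact hl2 e (hm ▸ he)

lemma isPathFromTo_single {V E₁ : Type*} (σ ρ : E₁ → V) (e : E₁) :
    IsPathFromTo σ ρ (σ e) (ρ e) [e] :=
  ⟨List.isChain_singleton e, fun h => by simp at h, by simp, by simp⟩

/-- **Two disjoint cycles at every vertex.** If `E` is strongly connected (for
all vertices `u`, `v` there is a path from `u` to `v`) and some vertex emits at
least two distinct edges, then at every vertex `v` there are two cycles
(paths of positive length from `v` to `v`) neither of which is a prefix of the
other. -/
theorem stmt8 {V E₁ : Type*} (σ ρ : E₁ → V)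
    (hconn : ∀ u v : V, ∃ l : List E₁, IsPathFromTo σ ρ u v l)
    (htwo : ∃ u : V, ∃ e f : E₁, e ≠ f ∧ σ e = u ∧ σ f = u) :
    ∀ v : V, ∃ c c' : List E₁, c ≠ [] ∧ c' ≠ [] ∧
      IsPathFromTo σ ρ v v c ∧ IsPathFromTo σ ρ v v c' ∧
      ¬ c <+: c' ∧ ¬ c' <+: c := by
  intro v
  obtain ⟨u, e, f, hef, hse, hsf⟩ := htwo
  obtain ⟨p, hp⟩ := hconn v u
  obtain ⟨q1, hq1⟩ := hconn (ρ e) v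
  obtain ⟨q2, hq2⟩ := hconn (ρ f) v
  refine ⟨p ++ e :: q1, p ++ f :: q2, by simp, by simp, ?_, ?_, ?_, ?_⟩
  · have := hp.append (((hse ▸ isPathFromTo_single σ ρ e) :
      IsPathFromTo σ ρ u (ρ e) [e]).append hq1)
    simpa using this
  · have := hp.append (((hsf ▸ isPathFromTo_single σ ρ f) :
      IsPathFromTo σ ρ u (ρ f) [f]).append hq2)
    simpa using this
  · rintro ⟨t, ht⟩
    rw [List.append_assoc] at ht
    have := List.append_cancel_left ht
    simp only [List.cons_append, List.cons.injEq] at this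
    exact hef this.1
  · rintro ⟨t, ht⟩
    rw [List.append_assoc] at ht
    have := List.append_cancel_left ht
    simp only [List.cons_append, List.cons.injEq] at this
    exact hef this.1.symm
end
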